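/- Nontrivial limit dynamics after rescaling time by R^α (critical slowing down compensated): let n ≥ 1, 0 < α < n, β > 0, τ ∈ ℝ, Y ∈ ℝⁿ, let j : ℝⁿ → ℂ be bounded, measurable, and continuous at 0, and let g : ℝⁿ → ℝ be a nonnegative measurable function with ∫_{ℝⁿ} (1 + |k|^{−α}) g(k) dk < ∞. Then lim_{R→∞} ∫_{ℝⁿ∖{0}} e^{i⟨k,Y⟩} · e^{i (|k|/R)^α · R^α · τ} · R^{−α} · (1 − e^{−β(|k|/R)^α})^{−1} · j(k/R) · g(k) dk = ∫_{ℝⁿ∖{0}} e^{i⟨k,Y⟩} · e^{i |k|^α τ} · (β |k|^α)^{−1} · j(0) · g(k) dk, a limit that depends nontrivially on the macroscopic time τ. -/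

import Mathlib

open MeasureTheory Complex Filter Real Topology

lemma aux_slope (c : ℝ) (hc : 0 < c) :
    Tendsto (fun u : ℝ => u * (1 - Real.exp (-(c * u)))⁻¹) (𝓝[>] (0:ℝ)) (𝓝 c⁻¹) := by
  have hderiv : HasDerivAt (fun u : ℝ => 1 - Real.exp (-(c * u))) c 0 := by
    have h1 : HasDerivAt (fun u : ℝ => -(c * u)) (-c) 0 := by
      simpa using ((hasDerivAt_id (0:ℝ)).const_mul c).fun_neg
    simpa using (h1.exp.const_sub 1)
  have hs : Tendsto (fun u : ℝ => (1 - Real.exp (-(c * u))) / u) (𝓝[≠] (0:ℝ)) (𝓝 c) := by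
    have h := hasDerivAt_iff_tendsto_slope.mp hderiv
    refine h.congr fun u => ?_
    simp [slope_def_field]
  have h2 := (hs.inv₀ hc.ne').mono_left
    (nhdsWithin_mono 0 (fun u (hu : u ∈ Set.Ioi (0:ℝ)) => (hu.ne' : u ≠ 0)))
  refine h2.congr fun u => ?_
  rw [inv_div, div_eq_mul_inv]

lemma aux_ineq {c u : ℝ} (hc : 0 < c) (hu0 : 0 < u) (hu1 : u ≤ 1) :
    u * (1 - Real.exp (-(c * u)))⁻¹ ≤ c⁻¹ + 1 := by
  have hy : 0 < c * u := mul_pos hc hu0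
  have h1 : Real.exp (-(c * u)) ≤ (1 + c * u)⁻¹ := by
    rw [Real.exp_neg]
    exact inv_anti₀ (by linarith) (by linarith [Real.add_one_le_exp (c * u)])
  have h2 : c * u / (1 + c * u) ≤ 1 - Real.exp (-(c * u)) := by
    have he : c * u / (1 + c * u) = 1 - (1 + c * u)⁻¹ := by field_simp; ring
    rw [he]; linarith
  have h3 : (1 - Real.exp (-(c * u)))⁻¹ ≤ (1 + c * u) / (c * u) := by
    rw [← inv_div]
    exact inv_anti₀ (div_pos hy (by linarith)) h2
  calc u * (1 - Real.exp (-(c * u)))⁻¹ ≤ u * ((1 + c * u) / (c * u)) :=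
        mul_le_mul_of_nonneg_left h3 hu0.le
    _ = c⁻¹ + u := by field_simp
    _ ≤ c⁻¹ + 1 := by linarith

theorem rescaled_time_limit_dynamics {n : ℕ} (hn : 1 ≤ n) (α : ℝ) (hα0 : 0 < α) (hαn : α < n)
    (β : ℝ) (hβ : 0 < β) (τ : ℝ) (Y : EuclideanSpace ℝ (Fin n))
    (j : EuclideanSpace ℝ (Fin n) → ℂ) (hjmeas : Measurable j)
    (Cj : ℝ) (hjbd : ∀ k, ‖j k‖ ≤ Cj) (hjcont : ContinuousAt j 0)
    (g : EuclideanSpace ℝ (Fin n) → ℝ) (hgmeas : Measurable g) (hgnn : ∀ k, 0 ≤ g k)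
    (hgint : Integrable (fun k : EuclideanSpace ℝ (Fin n) => (1 + ‖k‖ ^ (-α)) * g k)
      (volume : Measure (EuclideanSpace ℝ (Fin n)))) :
    Tendsto (fun R : ℝ =>
        ∫ k in ({0} : Set (EuclideanSpace ℝ (Fin n)))ᶜ,
          Complex.exp (Complex.I * ((inner ℝ k Y : ℝ) : ℂ)) *
            Complex.exp (Complex.I * (((‖k‖ / R) ^ α * R ^ α * τ : ℝ) : ℂ)) *
            ((R ^ (-α) : ℝ) : ℂ) *
            (1 - ((Real.exp (-(β * (‖k‖ / R) ^ α)) : ℝ) : ℂ))⁻¹ * j (R⁻¹ • k) *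
            ((g k : ℝ) : ℂ))
      atTop
      (𝓝 (∫ k in ({0} : Set (EuclideanSpace ℝ (Fin n)))ᶜ,
        Complex.exp (Complex.I * ((inner ℝ k Y : ℝ) : ℂ)) *
          Complex.exp (Complex.I * ((‖k‖ ^ α * τ : ℝ) : ℂ)) *
          (((β * ‖k‖ ^ α)⁻¹ : ℝ) : ℂ) * j 0 * ((g k : ℝ) : ℂ))) := by
  have h0meas : MeasurableSet (({0} : Set (EuclideanSpace ℝ (Fin n)))ᶜ) :=
    (measurableSet_singleton 0).compl
  have e1 : ∀ x : ℝ, ‖Complex.exp (Complex.I * (x : ℂ))‖ = 1 := by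
    intro x
    rw [mul_comm]
    exact Complex.norm_exp_ofReal_mul_I x
  refine tendsto_integral_filter_of_dominated_convergence
    (fun k => (max Cj 0 * max β⁻¹ 1) * ((1 + ‖k‖ ^ (-α)) * g k)) ?_ ?_ ?_ ?_
  · -- measurability
    refine Eventually.of_forall fun R => Measurable.aestronglyMeasurable ?_
    have mnorm : Measurable fun k : EuclideanSpace ℝ (Fin n) => (‖k‖ / R) ^ α :=
      ((Real.continuous_rpow_const hα0.le).comp (continuous_norm.div_const R)).measurable
    have m1 : Measurable fun k : EuclideanSpace ℝ (Fin n) =>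
        Complex.exp (Complex.I * ((inner ℝ k Y : ℝ) : ℂ)) := by
      exact (Complex.continuous_exp.comp (continuous_const.mul
        (Complex.continuous_ofReal.comp (continuous_id.inner continuous_const)))).measurable
    have m2 : Measurable fun k : EuclideanSpace ℝ (Fin n) =>
        Complex.exp (Complex.I * (((‖k‖ / R) ^ α * R ^ α * τ : ℝ) : ℂ)) :=
      Complex.measurable_exp.comp (measurable_const.mul
        (Complex.measurable_ofReal.comp ((mnorm.mul_const _).mul_const _)))
    have m3 : Measurable fun k : EuclideanSpace ℝ (Fin n) =>
        (1 - ((Real.exp (-(β * (‖k‖ / R) ^ α)) : ℝ) : ℂ))⁻¹ :=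
      (measurable_const.sub (Complex.measurable_ofReal.comp
        ((mnorm.const_mul β).neg.exp))).inv
    have m4 : Measurable fun k : EuclideanSpace ℝ (Fin n) => j (R⁻¹ • k) :=
      hjmeas.comp (measurable_const_smul _)
    exact ((((m1.mul m2).mul measurable_const).mul m3).mul m4).mul
      (Complex.measurable_ofReal.comp hgmeas)
  · -- bound
    filter_upwards [eventually_ge_atTop (1:ℝ)] with R hR
    filter_upwards [ae_restrict_mem h0meas] with k hk
    have hk0 : k ≠ 0 := hk
    have hR0 : (0:ℝ) < R := lt_of_lt_of_le one_pos hR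
    have hx : 0 < ‖k‖ := norm_pos_iff.mpr hk0
    have hy : 0 < β * (‖k‖ / R) ^ α :=
      mul_pos hβ (Real.rpow_pos_of_pos (div_pos hx hR0) α)
    have hepos : 0 < 1 - Real.exp (-(β * (‖k‖ / R) ^ α)) := by
      have h := Real.exp_lt_exp.mpr (show -(β * (‖k‖ / R) ^ α) < 0 by linarith)
      rw [Real.exp_zero] at h
      linarith
    have hcast : (1 - ((Real.exp (-(β * (‖k‖ / R) ^ α)) : ℝ) : ℂ))⁻¹
        = (((1 - Real.exp (-(β * (‖k‖ / R) ^ α)))⁻¹ : ℝ) : ℂ) := by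
      push_cast; ring
    rw [hcast]
    simp only [norm_mul, e1, Complex.norm_real, Real.norm_eq_abs, one_mul]
    rw [_root_.abs_of_nonneg (Real.rpow_nonneg hR0.le (-α)), _root_.abs_of_nonneg (inv_nonneg.mpr hepos.le),
      _root_.abs_of_nonneg (hgnn k)]
    -- key bound on the Bose factor
    have hA : R ^ (-α) * (1 - Real.exp (-(β * (‖k‖ / R) ^ α)))⁻¹ ≤ β⁻¹ * ‖k‖ ^ (-α) + 1 := by
      have hrw : β * (‖k‖ / R) ^ α = (β * ‖k‖ ^ α) * R ^ (-α) := by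
        rw [Real.div_rpow (norm_nonneg k) hR0.le, Real.rpow_neg hR0.le, div_eq_mul_inv]
        ring
      have hu0 : 0 < R ^ (-α) := Real.rpow_pos_of_pos hR0 _
      have hu1 : R ^ (-α) ≤ 1 :=
        Real.rpow_le_one_of_one_le_of_nonpos hR (neg_nonpos.mpr hα0.le)
      have hc : 0 < β * ‖k‖ ^ α := mul_pos hβ (Real.rpow_pos_of_pos hx α)
      have h := aux_ineq hc hu0 hu1
      rw [hrw]
      refine h.trans ?_
      rw [mul_inv, Real.rpow_neg hx.le]
    have hAnn : 0 ≤ R ^ (-α) * (1 - Real.exp (-(β * (‖k‖ / R) ^ α)))⁻¹ :=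
      mul_nonneg (Real.rpow_nonneg hR0.le _) (inv_nonneg.mpr hepos.le)
    have hJ : ‖j (R⁻¹ • k)‖ ≤ max Cj 0 := (hjbd _).trans (le_max_left _ _)
    have hA'nn : 0 ≤ β⁻¹ * ‖k‖ ^ (-α) + 1 := by positivity
    have h2 : β⁻¹ * ‖k‖ ^ (-α) + 1 ≤ max β⁻¹ 1 * (1 + ‖k‖ ^ (-α)) := by
      have hm1 := le_max_left β⁻¹ 1
      have hm2 := le_max_right β⁻¹ 1
      have hm3 : 0 ≤ ‖k‖ ^ (-α) := Real.rpow_nonneg (norm_nonneg k) (-α)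
      nlinarith
    calc R ^ (-α) * (1 - Real.exp (-(β * (‖k‖ / R) ^ α)))⁻¹ * ‖j (R⁻¹ • k)‖ * g k
        ≤ (β⁻¹ * ‖k‖ ^ (-α) + 1) * max Cj 0 * g k := by
          refine mul_le_mul_of_nonneg_right ?_ (hgnn k)
          exact mul_le_mul hA hJ (norm_nonneg _) hA'nn
      _ ≤ max β⁻¹ 1 * (1 + ‖k‖ ^ (-α)) * max Cj 0 * g k := by
          refine mul_le_mul_of_nonneg_right (mul_le_mul_of_nonneg_right h2 ?_) (hgnn k)
          exact le_max_right Cj 0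
      _ = max Cj 0 * max β⁻¹ 1 * ((1 + ‖k‖ ^ (-α)) * g k) := by ring
  · exact (hgint.restrict).const_mul _
  · -- pointwise limit
    filter_upwards [ae_restrict_mem h0meas] with k hk
    have hk0 : k ≠ 0 := hk
    have hx : 0 < ‖k‖ := norm_pos_iff.mpr hk0
    have hcpos : 0 < β * ‖k‖ ^ α := mul_pos hβ (Real.rpow_pos_of_pos hx α)
    -- factor of the phase: eventually constant
    have hT2 : Tendsto (fun R : ℝ =>
        Complex.exp (Complex.I * (((‖k‖ / R) ^ α * R ^ α * τ : ℝ) : ℂ))) atTop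
        (𝓝 (Complex.exp (Complex.I * ((‖k‖ ^ α * τ : ℝ) : ℂ)))) := by
      refine tendsto_const_nhds.congr' ?_
      filter_upwards [eventually_gt_atTop (0:ℝ)] with R hR
      rw [Real.div_rpow (norm_nonneg k) hR.le,
        div_mul_cancel₀ _ (Real.rpow_pos_of_pos hR α).ne']
    -- Bose factor
    have hT : Tendsto (fun R : ℝ => R ^ (-α)) atTop (𝓝[>] (0:ℝ)) := by
      rw [tendsto_nhdsWithin_iff]
      refine ⟨tendsto_rpow_neg_atTop hα0, ?_⟩
      filter_upwards [eventually_gt_atTop (0:ℝ)] with R hR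
      exact Real.rpow_pos_of_pos hR _
    have hT3r : Tendsto (fun R : ℝ =>
        R ^ (-α) * (1 - Real.exp (-(β * (‖k‖ / R) ^ α)))⁻¹) atTop (𝓝 (β * ‖k‖ ^ α)⁻¹) := by
      have h := (aux_slope _ hcpos).comp hT
      refine h.congr' ?_
      filter_upwards [eventually_gt_atTop (0:ℝ)] with R hR
      have hrw : β * (‖k‖ / R) ^ α = (β * ‖k‖ ^ α) * R ^ (-α) := by
        rw [Real.div_rpow (norm_nonneg k) hR.le, Real.rpow_neg hR.le, div_eq_mul_inv]
        ring
      simp only [Function.comp_apply]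
      rw [hrw]
    have hT3 : Tendsto (fun R : ℝ =>
        ((R ^ (-α) : ℝ) : ℂ) * (1 - ((Real.exp (-(β * (‖k‖ / R) ^ α)) : ℝ) : ℂ))⁻¹) atTop
        (𝓝 ((((β * ‖k‖ ^ α)⁻¹ : ℝ) : ℂ))) := by
      have h := (Complex.continuous_ofReal.tendsto _).comp hT3r
      refine h.congr fun R => ?_
      simp only [Function.comp_apply]
      push_cast
      ring
    have hT4 : Tendsto (fun R : ℝ => j (R⁻¹ • k)) atTop (𝓝 (j 0)) := by
      have h1 : Tendsto (fun R : ℝ => R⁻¹ • k) atTop (𝓝 (0 : EuclideanSpace ℝ (Fin n))) := by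
        have h0 : Tendsto (fun R : ℝ => R⁻¹) atTop (𝓝 (0:ℝ)) := tendsto_inv_atTop_zero
        have h1 := h0.smul_const k
        rwa [zero_smul] at h1
      exact hjcont.tendsto.comp h1
    have hfull := ((((tendsto_const_nhds
        (x := Complex.exp (Complex.I * ((inner ℝ k Y : ℝ) : ℂ)))).mul hT2).mul hT3).mul hT4).mul
      (tendsto_const_nhds (x := ((g k : ℝ) : ℂ)) (f := atTop))
    refine hfull.congr fun R => ?_
    ring
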